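/- arXiv:1901.08186 — 5 statements merged into one kernel-verified Lean document; each statement's English description precedes it below -/
import Mathlib

section
/- Let K be an invertible ℓ×ℓ matrix over F_2 and fix i with 1 ≤ i ≤ ℓ. An erasure pattern e ∈ F_2^ℓ is uncorrectable for bit-channel i if and only if e covers some vector of the set difference C_{i-1} \ C_i, i.e., if and only if there exists c ∈ C_{i-1} with c ∉ C_i and supp(c) ⊆ supp(e). -/
/-- The support of a vector over `ZMod 2`. -/
def supp {ℓ : ℕ} (v : Fin ℓ → ZMod 2) : Set (Fin ℓ) := {j | v j ≠ 0}

/-- The Hamming weight of a vector over `ZMod 2`. -/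
def wt {ℓ : ℕ} (v : Fin ℓ → ZMod 2) : ℕ :=
  (Finset.univ.filter fun j => v j ≠ 0).card

/-- The kernel code `C_i`: the span of the rows `g_{i+1}, …, g_ℓ` of `K`
(rows of index `≥ i` in 0-based indexing). -/
def kernelCode {ℓ : ℕ} (K : Matrix (Fin ℓ) (Fin ℓ) (ZMod 2)) (i : ℕ) :
    Submodule (ZMod 2) (Fin ℓ → ZMod 2) :=
  Submodule.span (ZMod 2) {v | ∃ r : Fin ℓ, i ≤ (r : ℕ) ∧ v = K r}

/-- `e` is an uncorrectable erasure pattern for the bit-channel of (0-based) index `i`. -/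
def Uncorrectable {ℓ : ℕ} (K : Matrix (Fin ℓ) (Fin ℓ) (ZMod 2)) (i : Fin ℓ)
    (e : Fin ℓ → ZMod 2) : Prop :=
  ∃ u' u'' : Fin ℓ → ZMod 2,
    (∀ j, j < i → u' j = u'' j) ∧ u' i ≠ u'' i ∧
      ∀ j, e j = 0 → Matrix.vecMul u' K j = Matrix.vecMul u'' K j

/-- `E_{i,w}`: the number of uncorrectable erasure patterns of weight `w`
for bit-channel `i`. -/
noncomputable def Ecount {ℓ : ℕ} (K : Matrix (Fin ℓ) (Fin ℓ) (ZMod 2)) (i : Fin ℓ)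
    (w : ℕ) : ℕ :=
  Nat.card {e : Fin ℓ → ZMod 2 // Uncorrectable K i e ∧ wt e = w}

/-- `f_i(z) = ∑_{w=0}^{ℓ} E_{i,w} z^w (1-z)^{ℓ-w}`. -/
noncomputable def fpoly {ℓ : ℕ} (K : Matrix (Fin ℓ) (Fin ℓ) (ZMod 2)) (i : Fin ℓ)
    (z : ℝ) : ℝ :=
  ∑ w ∈ Finset.range (ℓ + 1), (Ecount K i w : ℝ) * z ^ w * (1 - z) ^ (ℓ - w)

/-- Dual code with respect to the standard bilinear form `⟨u,v⟩ = ∑ j, u j * v j`. -/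
def dualCode {ℓ : ℕ} (C : Submodule (ZMod 2) (Fin ℓ → ZMod 2)) :
    Submodule (ZMod 2) (Fin ℓ → ZMod 2) where
  carrier := {v | ∀ c ∈ C, ∑ j, v j * c j = 0}
  add_mem' := by
    intro a b ha hb c hc
    simpa [add_mul, Finset.sum_add_distrib] using by rw [ha c hc, hb c hc]; simp
  zero_mem' := by intro c hc; simp
  smul_mem' := by
    intro r a ha c hc
    simp only [Pi.smul_apply, smul_eq_mul, mul_assoc, ← Finset.mul_sum, Set.mem_setOf_eq]
    rw [ha c hc, mul_zero]

/-- `K` is self-dual if `C_i = C_{ℓ-i}^⊥` for all `0 ≤ i ≤ ℓ`. -/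
def SelfDual {ℓ : ℕ} (K : Matrix (Fin ℓ) (Fin ℓ) (ZMod 2)) : Prop :=
  ∀ i ≤ ℓ, kernelCode K i = dualCode (kernelCode K (ℓ - i))



lemma vecMul_eq_sum' {ℓ : ℕ} (K : Matrix (Fin ℓ) (Fin ℓ) (ZMod 2)) (d : Fin ℓ → ZMod 2) :
    Matrix.vecMul d K = ∑ r, d r • K r := by
  funext j
  simp [Matrix.vecMul, dotProduct, Finset.sum_apply]

lemma mem_kernelCode_iff {ℓ : ℕ} (K : Matrix (Fin ℓ) (Fin ℓ) (ZMod 2)) (i : ℕ)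
    (c : Fin ℓ → ZMod 2) :
    c ∈ kernelCode K i ↔ ∃ d : Fin ℓ → ZMod 2,
      (∀ r : Fin ℓ, (r : ℕ) < i → d r = 0) ∧ c = Matrix.vecMul d K := by
  constructor
  · intro hc
    induction hc using Submodule.span_induction with
    | mem v hv =>
      obtain ⟨r, hr, rfl⟩ := hv
      refine ⟨Pi.single r 1, fun s hs => Pi.single_eq_of_ne (Fin.ne_of_val_ne (by omega)) 1, ?_⟩
      funext j
      simp [Matrix.vecMul, dotProduct, Pi.single_apply, Finset.sum_ite_eq]
    | zero => exact ⟨0, fun _ _ => rfl, by simp⟩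
    | add x y hx hy ihx ihy =>
      obtain ⟨d1, h1, rfl⟩ := ihx
      obtain ⟨d2, h2, rfl⟩ := ihy
      exact ⟨d1 + d2, fun r hr => by simp [h1 r hr, h2 r hr],
        (Matrix.add_vecMul K d1 d2).symm⟩
    | smul a x hx ihx =>
      obtain ⟨d, h1, rfl⟩ := ihx
      exact ⟨a • d, fun r hr => by simp [h1 r hr], by rw [Matrix.smul_vecMul]⟩
  · rintro ⟨d, hd, rfl⟩
    rw [vecMul_eq_sum']
    refine Submodule.sum_mem _ fun r _ => ?_
    by_cases hr : (r : ℕ) < i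
    · simp [hd r hr]
    · exact Submodule.smul_mem _ _ (Submodule.subset_span ⟨r, le_of_not_gt hr, rfl⟩)

lemma vecMul_inj {ℓ : ℕ} {K : Matrix (Fin ℓ) (Fin ℓ) (ZMod 2)} (hK : IsUnit K.det)
    {d d' : Fin ℓ → ZMod 2} (h : Matrix.vecMul d K = Matrix.vecMul d' K) : d = d' := by
  have := congrArg (fun v => Matrix.vecMul v K⁻¹) h
  simpa [Matrix.vecMul_vecMul, Matrix.mul_nonsing_inv K hK] using this

/-- Theorem 1: an erasure pattern `e` is uncorrectable for bit-channel `i` if and only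
if `e` covers some vector of `C_{i-1} \ C_i`. -/
theorem erasure_uncorrectable_iff_covers {ℓ : ℕ} (hℓ : 0 < ℓ)
    (K : Matrix (Fin ℓ) (Fin ℓ) (ZMod 2)) (hK : IsUnit K.det)
    (i : Fin ℓ) (e : Fin ℓ → ZMod 2) :
    Uncorrectable K i e ↔
      ∃ c, c ∈ kernelCode K (i : ℕ) ∧ c ∉ kernelCode K ((i : ℕ) + 1) ∧
        supp c ⊆ supp e := by
  constructor
  · rintro ⟨u', u'', hlt, hi, he⟩
    set d := u' - u'' with hd
    refine ⟨Matrix.vecMul d K, ?_, ?_, ?_⟩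
    · rw [mem_kernelCode_iff]
      exact ⟨d, fun r hr => by
        simp [hd, sub_eq_zero, hlt r (Fin.lt_def.mpr hr)], rfl⟩
    · intro hmem
      rw [mem_kernelCode_iff] at hmem
      obtain ⟨d', hd', hdd⟩ := hmem
      have : d = d' := vecMul_inj hK hdd
      have hdi : d i = 0 := this ▸ hd' i (by omega)
      exact hi (by simpa [hd, sub_eq_zero] using hdi)
    · intro j hj
      simp only [supp, Set.mem_setOf_eq] at hj ⊢
      intro hej
      exact hj (by simp [hd, Matrix.sub_vecMul, he j hej])
  · rintro ⟨c, hc, hc', hsupp⟩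
    rw [mem_kernelCode_iff] at hc
    obtain ⟨d, hd, rfl⟩ := hc
    have hdi : d i ≠ 0 := by
      intro h0
      exact hc' ((mem_kernelCode_iff K _ _).mpr
        ⟨d, fun r hr => by rcases Nat.lt_succ_iff_lt_or_eq.mp hr with h | h
                           · exact hd r h
                           · exact (Fin.val_injective h : r = i) ▸ h0, rfl⟩)
    refine ⟨d, 0, fun j hj => ?_, by simpa using hdi, fun j hj => ?_⟩
    · simp [hd j (Fin.lt_def.mp hj)]
    · have hj' : Matrix.vecMul d K j = 0 := by
        by_contra h
        exact hsupp h hj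
      simp [hj', Matrix.zero_vecMul]
end

section
/- Let K be an invertible ℓ×ℓ matrix over F_2 and fix i with 1 ≤ i ≤ ℓ. The function f_i is nondecreasing on [0,1]: for all real z_1, z_2 with 0 ≤ z_1 ≤ z_2 ≤ 1, one has f_i(z_1) ≤ f_i(z_2). -/
open scoped Classical in
open Finset in
lemma my_uncorr_mono {ℓ : ℕ} (K : Matrix (Fin ℓ) (Fin ℓ) (ZMod 2)) (i : Fin ℓ)
    {e e' : Fin ℓ → ZMod 2} (h : Uncorrectable K i e) (hs : ∀ j, e' j = 0 → e j = 0) :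
    Uncorrectable K i e' := by
  obtain ⟨u', u'', h1, h2, h3⟩ := h
  exact ⟨u', u'', h1, h2, fun j hj => h3 j (hs j hj)⟩

open Finset in
lemma my_wt_update {ℓ : ℕ} (e : Fin ℓ → ZMod 2) (j : Fin ℓ) (hj : e j = 0) :
    wt (Function.update e j 1) = wt e + 1 := by
  classical
  have h : (Finset.univ.filter fun k => Function.update e j 1 k ≠ 0)
      = insert j (Finset.univ.filter fun k => e k ≠ 0) := by
    ext k
    by_cases hk : k = j <;> simp [Function.update_apply, hk, hj]
  rw [wt, h, Finset.card_insert_of_notMem (by simp [hj]), wt]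

open Finset in
open scoped Classical in
lemma my_Ecount_eq {ℓ : ℕ} (K : Matrix (Fin ℓ) (Fin ℓ) (ZMod 2)) (i : Fin ℓ) (w : ℕ) :
    Ecount K i w
      = ((Finset.univ : Finset (Fin ℓ → ZMod 2)).filter
          fun e => Uncorrectable K i e ∧ wt e = w).card := by
  classical
  rw [Ecount, Nat.card_eq_fintype_card, Fintype.card_subtype]

open Finset in
open scoped Classical in
lemma my_key {ℓ : ℕ} (K : Matrix (Fin ℓ) (Fin ℓ) (ZMod 2)) (i : Fin ℓ) {w : ℕ}
    (hw : w < ℓ) :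
    (ℓ - w) * Ecount K i w ≤ (w + 1) * Ecount K i (w + 1) := by
  classical
  set Uw := (Finset.univ : Finset (Fin ℓ → ZMod 2)).filter
      (fun e => Uncorrectable K i e ∧ wt e = w) with hUw
  set Uw1 := (Finset.univ : Finset (Fin ℓ → ZMod 2)).filter
      (fun e => Uncorrectable K i e ∧ wt e = w + 1) with hUw1
  set S := Uw.sigma (fun e => Finset.univ.filter fun j => e j = 0) with hS
  set T := Uw1.sigma (fun e => Finset.univ.filter fun j => e j ≠ 0) with hT
  have hcardS : S.card = (ℓ - w) * Uw.card := by
    rw [hS, Finset.card_sigma]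
    rw [Finset.sum_congr rfl (fun e he => ?_), Finset.sum_const, smul_eq_mul, mul_comm]
    have hwt : wt e = w := ((Finset.mem_filter.mp he).2).2
    have := Finset.card_filter_add_card_filter_not
      (s := (Finset.univ : Finset (Fin ℓ))) (p := fun j => e j ≠ 0)
    simp only [not_not] at this
    have hu : (Finset.univ : Finset (Fin ℓ)).card = ℓ := by simp
    rw [wt] at hwt
    omega
  have hcardT : T.card = (w + 1) * Uw1.card := by
    rw [hT, Finset.card_sigma]
    rw [Finset.sum_congr rfl (fun e he => ?_), Finset.sum_const, smul_eq_mul, mul_comm]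
    exact ((Finset.mem_filter.mp he).2).2
  have hle : S.card ≤ T.card := by
    apply Finset.card_le_card_of_injOn (fun p => ⟨Function.update p.1 p.2 1, p.2⟩)
    · rintro ⟨e, j⟩ hp
      dsimp only at *
      rw [hS, Finset.mem_coe, Finset.mem_sigma] at hp
      obtain ⟨he, hj⟩ := hp
      rw [hUw, Finset.mem_filter] at he
      simp only [Finset.mem_filter, Finset.mem_univ, true_and] at hj
      rw [hT, Finset.mem_coe, Finset.mem_sigma, hUw1, Finset.mem_filter]
      refine ⟨⟨Finset.mem_univ _, ?_, ?_⟩, ?_⟩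
      · refine my_uncorr_mono K i he.2.1 (fun k hk => ?_)
        dsimp only at hk
        by_cases hkj : k = j
        · exfalso; rw [hkj, Function.update_self] at hk; exact one_ne_zero hk
        · rwa [Function.update_of_ne hkj] at hk
      · rw [my_wt_update e j hj, he.2.2]
      · simp [Function.update_self]
    · rintro ⟨e, j⟩ hp ⟨e', j'⟩ hp' heq
      dsimp only at heq
      simp only [Finset.mem_coe, hS, Finset.mem_sigma] at hp hp'
      simp only [Finset.mem_filter, Finset.mem_univ, true_and] at hp hp'
      obtain ⟨rfl, hupd⟩ : j = j' ∧ Function.update e j 1 = Function.update e' j' 1 := by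
        have h1 := congrArg Sigma.fst heq
        have h2 := congrArg Sigma.snd heq
        simp at h1 h2
        exact ⟨h2, h1⟩
      have : e = e' := by
        funext k
        by_cases hkj : k = j
        · rw [hkj, hp.2, hp'.2]
        · have := congrFun hupd k
          rwa [Function.update_of_ne hkj, Function.update_of_ne hkj] at this
      rw [this]
  rw [my_Ecount_eq, my_Ecount_eq, ← hUw, ← hUw1]
  omega

open Finset in
lemma my_hasDerivAt_fpoly {ℓ : ℕ} (K : Matrix (Fin ℓ) (Fin ℓ) (ZMod 2)) (i : Fin ℓ)
    (z : ℝ) :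
    HasDerivAt (fpoly K i)
      (∑ w ∈ Finset.range ℓ,
        ((((w + 1) * Ecount K i (w + 1) : ℕ) : ℝ) - (((ℓ - w) * Ecount K i w : ℕ) : ℝ))
          * z ^ w * (1 - z) ^ (ℓ - 1 - w)) z := by
  set c : ℕ → ℝ := fun w => (Ecount K i w : ℝ) with hc
  have hterm : ∀ w : ℕ, HasDerivAt (fun z : ℝ => c w * z ^ w * (1 - z) ^ (ℓ - w))
      (c w * (w : ℝ) * z ^ (w - 1) * (1 - z) ^ (ℓ - w)
        - c w * ((ℓ - w : ℕ) : ℝ) * z ^ w * (1 - z) ^ (ℓ - w - 1)) z := by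
    intro w
    have hp : HasDerivAt (fun z : ℝ => z ^ w) ((w : ℝ) * z ^ (w - 1)) z :=
      hasDerivAt_pow w z
    have h0 : HasDerivAt (fun z : ℝ => 1 - z) (-1) z := by
      simpa using (hasDerivAt_const z (1 : ℝ)).fun_sub (hasDerivAt_id z)
    have hq : HasDerivAt (fun z : ℝ => (1 - z) ^ (ℓ - w))
        (-(((ℓ - w : ℕ) : ℝ) * (1 - z) ^ (ℓ - w - 1))) z := by
      simpa [mul_comm, mul_assoc, Function.comp_def] using (hasDerivAt_pow (ℓ - w) (1 - z)).comp z h0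
    have := ((hp.const_mul (c w)).fun_mul hq)
    exact this.congr_deriv (by ring)
  have hsum := HasDerivAt.fun_sum
    (fun w (_ : w ∈ Finset.range (ℓ + 1)) => hterm w)
  have heq : ∑ w ∈ Finset.range (ℓ + 1),
      (c w * (w : ℝ) * z ^ (w - 1) * (1 - z) ^ (ℓ - w)
        - c w * ((ℓ - w : ℕ) : ℝ) * z ^ w * (1 - z) ^ (ℓ - w - 1))
      = ∑ w ∈ Finset.range ℓ,
        ((((w + 1) * Ecount K i (w + 1) : ℕ) : ℝ) - (((ℓ - w) * Ecount K i w : ℕ) : ℝ))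
          * z ^ w * (1 - z) ^ (ℓ - 1 - w) := by
    rw [Finset.sum_sub_distrib]
    rw [Finset.sum_range_succ' (fun w => c w * (w : ℝ) * z ^ (w - 1) * (1 - z) ^ (ℓ - w)) ℓ]
    rw [Finset.sum_range_succ (fun w => c w * ((ℓ - w : ℕ) : ℝ) * z ^ w * (1 - z) ^ (ℓ - w - 1)) ℓ]
    simp only [Nat.sub_self, Nat.cast_zero, Nat.cast_ofNat, mul_zero, zero_mul, add_zero]
    rw [← Finset.sum_sub_distrib]
    apply Finset.sum_congr rfl
    intro w hw
    rw [Finset.mem_range] at hw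
    have h1 : (w + 1) - 1 = w := rfl
    have h2 : ℓ - (w + 1) = ℓ - 1 - w := by omega
    have h3 : ℓ - w - 1 = ℓ - 1 - w := by omega
    rw [h1, h2, h3]
    push_cast
    ring
  exact heq ▸ hsum

/-- `f_i` is nondecreasing on `[0,1]`. -/
theorem fpoly_monotoneOn {ℓ : ℕ} (hℓ : 0 < ℓ)
    (K : Matrix (Fin ℓ) (Fin ℓ) (ZMod 2)) (hK : IsUnit K.det) (i : Fin ℓ) :
    ∀ z₁ z₂ : ℝ, 0 ≤ z₁ → z₁ ≤ z₂ → z₂ ≤ 1 → fpoly K i z₁ ≤ fpoly K i z₂ := by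
  have hmono : MonotoneOn (fpoly K i) (Set.Icc 0 1) := by
    apply monotoneOn_of_deriv_nonneg (convex_Icc 0 1)
    · exact fun x _ => (my_hasDerivAt_fpoly K i x).continuousAt.continuousWithinAt
    · exact fun x _ => (my_hasDerivAt_fpoly K i x).differentiableAt.differentiableWithinAt
    · intro x hx
      rw [interior_Icc] at hx
      rw [(my_hasDerivAt_fpoly K i x).deriv]
      apply Finset.sum_nonneg
      intro w hw
      rw [Finset.mem_range] at hw
      have hcoef : (0 : ℝ) ≤ (((w + 1) * Ecount K i (w + 1) : ℕ) : ℝ)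
          - (((ℓ - w) * Ecount K i w : ℕ) : ℝ) := by
        rw [sub_nonneg, Nat.cast_le]
        exact my_key K i hw
      have hz : (0 : ℝ) ≤ x ^ w := pow_nonneg hx.1.le w
      have hz2 : (0 : ℝ) ≤ (1 - x) ^ (ℓ - 1 - w) := pow_nonneg (by linarith [hx.2]) _
      positivity
  intro z₁ z₂ h0 h12 h21
  exact hmono ⟨h0, h12.trans h21⟩ ⟨h0.trans h12, h21⟩ h12
end

section
/- Let K be an invertible ℓ×ℓ matrix over F_2. For every erasure pattern e ∈ F_2^ℓ, the number of indices i ∈ {1,…,ℓ} for which e is uncorrectable for bit-channel i equals the Hamming weight wt(e). -/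
set_option synthInstance.maxHeartbeats 1000000
set_option maxHeartbeats 1000000


section Aux

open Module


section Pivots

open scoped Classical

variable {ℓ : ℕ}

/-- Vectors vanishing on the first `k` coordinates. -/
def Zk (ℓ k : ℕ) : Submodule (ZMod 2) (Fin ℓ → ZMod 2) where
  carrier := {v | ∀ j : Fin ℓ, (j : ℕ) < k → v j = 0}
  add_mem' := by intro a b ha hb j hj; simp [ha j hj, hb j hj]
  zero_mem' := by intro j hj; rfl
  smul_mem' := by intro c v hv j hj; simp [hv j hj]

def Piv (W : Submodule (ZMod 2) (Fin ℓ → ZMod 2)) (i : Fin ℓ) : Prop :=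
  ∃ v ∈ W, (∀ j : Fin ℓ, (j : ℕ) < (i : ℕ) → v j = 0) ∧ v i ≠ 0

lemma zmod2_ne_zero : ∀ x : ZMod 2, x ≠ 0 → x = 1 := by decide

lemma step (W : Submodule (ZMod 2) (Fin ℓ → ZMod 2)) (i : Fin ℓ) :
    finrank (ZMod 2) ↥(W ⊓ Zk ℓ i) =
      finrank (ZMod 2) ↥(W ⊓ Zk ℓ ((i : ℕ) + 1)) + (if Piv W i then 1 else 0) := by
  set A := W ⊓ Zk ℓ i with hA
  set B := W ⊓ Zk ℓ ((i : ℕ) + 1) with hB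
  have hle : B ≤ A := by
    refine inf_le_inf_left _ ?_
    intro v hv j hj
    exact hv j (Nat.lt_succ_of_lt hj)
  set f : ↥A →ₗ[ZMod 2] ZMod 2 := (LinearMap.proj i).comp A.subtype with hf
  have hker : LinearMap.ker f = B.comap A.subtype := by
    ext ⟨v, hv⟩
    simp only [LinearMap.mem_ker, Submodule.mem_comap, hf, LinearMap.comp_apply,
      Submodule.subtype_apply, LinearMap.proj_apply]
    constructor
    · intro h
      refine ⟨hv.1, ?_⟩
      intro j hj
      rcases Nat.lt_succ_iff_lt_or_eq.mp hj with hj' | hj'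
      · exact hv.2 j hj'
      · have : j = i := Fin.ext hj'
        subst this; exact h
    · intro h
      exact h.2 i (Nat.lt_succ_self _)
  have hkerrank : finrank (ZMod 2) ↥(LinearMap.ker f) = finrank (ZMod 2) ↥B := by
    rw [hker]
    exact (Submodule.comapSubtypeEquivOfLe hle).finrank_eq
  have hrange : finrank (ZMod 2) ↥(LinearMap.range f) = (if Piv W i then 1 else 0) := by
    by_cases hp : Piv W i
    · obtain ⟨v, hvW, hv0, hvi⟩ := hp
      have hvA : v ∈ A := ⟨hvW, hv0⟩
      have : LinearMap.range f = ⊤ := by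
        rw [eq_top_iff]
        rintro y -
        refine ⟨y • ⟨v, hvA⟩, ?_⟩
        simp [hf, zmod2_ne_zero _ hvi]
      rw [this, if_pos ⟨v, hvW, hv0, hvi⟩, finrank_top]
      exact finrank_self _
    · have hf0 : f = 0 := by
        ext ⟨v, hvW, hv0⟩
        simp only [hf, LinearMap.comp_apply, Submodule.subtype_apply, LinearMap.proj_apply,
          LinearMap.zero_apply]
        by_contra h
        exact hp ⟨v, hvW, hv0, h⟩
      rw [hf0, LinearMap.range_zero, if_neg hp, finrank_bot]
  have hrn := LinearMap.finrank_range_add_finrank_ker f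
  omega

lemma tele (W : Submodule (ZMod 2) (Fin ℓ → ZMod 2)) :
    ∀ n k, k + n = ℓ →
      finrank (ZMod 2) ↥(W ⊓ Zk ℓ k) =
        (Finset.univ.filter fun i : Fin ℓ => k ≤ (i : ℕ) ∧ Piv W i).card := by
  intro n
  induction n with
  | zero =>
    intro k hk
    subst hk
    simp only [Nat.add_zero]
    have h1 : W ⊓ Zk k k = ⊥ := by
      rw [eq_bot_iff]
      rintro v ⟨-, hz⟩
      have : v = 0 := funext fun j => hz j j.isLt
      simp [this]
    have h2 : (Finset.univ.filter fun i : Fin k => k ≤ (i : ℕ) ∧ Piv W i) = ∅ := by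
      rw [Finset.filter_eq_empty_iff]
      rintro i - ⟨h, -⟩
      exact absurd h (by omega)
    rw [h2, Finset.card_empty]
    exact Submodule.finrank_eq_zero.mpr h1
  | succ n ih =>
    intro k hk
    have hkℓ : k < ℓ := by omega
    set i₀ : Fin ℓ := ⟨k, hkℓ⟩ with hi₀
    have h1 := step W i₀
    have h2 := ih (k + 1) (by omega)
    rw [h1, h2]
    have key : ∀ i : Fin ℓ,
        (if k ≤ (i : ℕ) ∧ Piv W i then 1 else 0) =
          (if k + 1 ≤ (i : ℕ) ∧ Piv W i then 1 else 0) +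
            (if i = i₀ then (if Piv W i then 1 else 0) else 0) := by
      intro i
      by_cases hp : Piv W i
      · by_cases hik : (i : ℕ) = k
        · have : i = i₀ := Fin.ext hik
          subst this
          simp [hp, hik]
        · have : i ≠ i₀ := fun h => hik (by rw [h])
          simp only [hp, and_true, if_neg this, add_zero]
          by_cases h' : k ≤ (i : ℕ)
          · rw [if_pos h', if_pos (by omega)]
          · rw [if_neg h', if_neg (by omega)]
      · simp [hp]
    rw [Finset.card_filter, Finset.card_filter]
    rw [Finset.sum_congr rfl fun i _ => key i, Finset.sum_add_distrib]
    congr 1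
    rw [Finset.sum_ite_eq' Finset.univ i₀ (fun i => if Piv W i then 1 else 0),
      if_pos (Finset.mem_univ _)]

lemma pivot_count (W : Submodule (ZMod 2) (Fin ℓ → ZMod 2)) :
    finrank (ZMod 2) ↥W = (Finset.univ.filter fun i : Fin ℓ => Piv W i).card := by
  have h0 : Zk ℓ 0 = ⊤ := by
    rw [eq_top_iff]; intro v _ j hj; omega
  have := tele W ℓ 0 (by omega)
  rw [h0, inf_top_eq] at this
  rw [this]
  congr 1
  ext i
  simp

end Pivots

/-- Vectors supported in the support of `e`. -/
def Se {ℓ : ℕ} (e : Fin ℓ → ZMod 2) : Submodule (ZMod 2) (Fin ℓ → ZMod 2) where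
  carrier := {w | ∀ j, e j = 0 → w j = 0}
  add_mem' := by intro a b ha hb j hj; simp [ha j hj, hb j hj]
  zero_mem' := by intro j hj; rfl
  smul_mem' := by intro c v hv j hj; simp [hv j hj]

noncomputable def SeEquiv {ℓ : ℕ} (e : Fin ℓ → ZMod 2) :
    ↥(Se e) ≃ₗ[ZMod 2] ({j : Fin ℓ // e j ≠ 0} → ZMod 2) where
  toFun w j := w.1 j.1
  invFun g := ⟨fun j => if h : e j ≠ 0 then g ⟨j, h⟩ else 0, by
    intro j hj
    exact dif_neg (by simp [hj])⟩
  left_inv w := by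
    ext j
    by_cases h : e j ≠ 0
    · simp [h]
    · have h' : e j = 0 := not_not.mp h
      simp [h', w.2 j h']
  right_inv g := by
    ext j
    simp [dif_pos j.2]
  map_add' a b := rfl
  map_smul' c a := rfl

lemma finrank_Se {ℓ : ℕ} (e : Fin ℓ → ZMod 2) :
    finrank (ZMod 2) ↥(Se e) = wt e := by
  rw [(SeEquiv e).finrank_eq, Module.finrank_fintype_fun_eq_card, wt, Fintype.card_subtype]


end Aux

/-- For every erasure pattern `e`, the number of bit-channels for which `e` is
uncorrectable equals the Hamming weight of `e`. -/
theorem card_uncorrectable_channels_eq_wt {ℓ : ℕ} (hℓ : 0 < ℓ)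
    (K : Matrix (Fin ℓ) (Fin ℓ) (ZMod 2)) (hK : IsUnit K.det)
    (e : Fin ℓ → ZMod 2) :
    Nat.card {i : Fin ℓ // Uncorrectable K i e} = wt e := by
  classical
  set W : Submodule (ZMod 2) (Fin ℓ → ZMod 2) := (Se e).comap (Matrix.vecMulLinear K) with hW
  have hWmem : ∀ v, v ∈ W ↔ ∀ j, e j = 0 → Matrix.vecMul v K j = 0 := by
    intro v; rfl
  -- Uncorrectable ↔ Piv W
  have hiff : ∀ i : Fin ℓ, Uncorrectable K i e ↔ Piv W i := by
    intro i
    constructor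
    · rintro ⟨u', u'', h1, h2, h3⟩
      refine ⟨u' - u'', ?_, ?_, ?_⟩
      · rw [hWmem]
        intro j hj
        have := map_sub (Matrix.vecMulLinear K) u' u''
        calc Matrix.vecMul (u' - u'') K j
            = (Matrix.vecMul u' K - Matrix.vecMul u'' K) j := by
              rw [show Matrix.vecMul (u' - u'') K = Matrix.vecMulLinear K (u' - u'') from rfl,
                this]; rfl
          _ = 0 := by simp [h3 j hj]
      · intro j hj
        have : u' j = u'' j := h1 j (Fin.lt_def.mpr hj)
        simp [this]
      · simpa [sub_ne_zero] using h2
    · rintro ⟨v, hvW, hv0, hvi⟩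
      refine ⟨v, 0, ?_, by simpa using hvi, ?_⟩
      · intro j hj
        simp [hv0 j (Fin.lt_def.mp hj)]
      · intro j hj
        rw [hWmem] at hvW
        simp [hvW j hj, Matrix.zero_vecMul]
  have hcard : Nat.card {i : Fin ℓ // Uncorrectable K i e} =
      (Finset.univ.filter fun i : Fin ℓ => Piv W i).card := by
    rw [Nat.card_eq_fintype_card, Fintype.card_subtype]
    congr 1
    ext i
    simp [hiff i]
  rw [hcard, ← pivot_count W]
  -- linear equivalence via K
  have hK1 : K⁻¹ * K = 1 := Matrix.nonsing_inv_mul K hK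
  have hK2 : K * K⁻¹ = 1 := Matrix.mul_nonsing_inv K hK
  set φ : (Fin ℓ → ZMod 2) ≃ₗ[ZMod 2] (Fin ℓ → ZMod 2) :=
    LinearEquiv.ofLinear (Matrix.vecMulLinear K) (Matrix.vecMulLinear K⁻¹)
      (LinearMap.ext fun v => show Matrix.vecMul (Matrix.vecMul v K⁻¹) K = v by
        rw [Matrix.vecMul_vecMul, hK1, Matrix.vecMul_one])
      (LinearMap.ext fun v => show Matrix.vecMul (Matrix.vecMul v K) K⁻¹ = v by
        rw [Matrix.vecMul_vecMul, hK2, Matrix.vecMul_one]) with hφ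
  have : W = (Se e).comap (φ : (Fin ℓ → ZMod 2) →ₗ[ZMod 2] (Fin ℓ → ZMod 2)) := rfl
  rw [this, (LinearEquiv.ofSubmodule' φ (Se e)).finrank_eq, finrank_Se]
end

section
/- Let K be an invertible ℓ×ℓ matrix over F_2. A single polarization step is capacity preserving: for every real z, ∑_{i=1}^ℓ f_i(z) = ℓ·z. -/
open scoped Classical

namespace CapPres

variable {ℓ : ℕ}

/-- The submodule of vectors supported inside the support of `e`. -/
def Esub (e : Fin ℓ → ZMod 2) : Submodule (ZMod 2) (Fin ℓ → ZMod 2) where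
  carrier := {v | ∀ j, e j = 0 → v j = 0}
  add_mem' := by intro a b ha hb j hj; simp [ha j hj, hb j hj]
  zero_mem' := by intro j _; rfl
  smul_mem' := by intro c v hv j hj; simp [hv j hj]

lemma mem_Esub {e v : Fin ℓ → ZMod 2} : v ∈ Esub e ↔ ∀ j, e j = 0 → v j = 0 := Iff.rfl

/-- Coordinates inside the support give a linear equivalence. -/
noncomputable def esubEquiv (e : Fin ℓ → ZMod 2) :
    Esub e ≃ₗ[ZMod 2] ({j : Fin ℓ // e j ≠ 0} → ZMod 2) where
  toFun v j := v.1 j.1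
  map_add' _ _ := rfl
  map_smul' _ _ := rfl
  invFun f := ⟨fun j => if h : e j ≠ 0 then f ⟨j, h⟩ else 0, by
    intro j hj; simp [hj]⟩
  left_inv v := by
    ext j
    by_cases h : e j = 0
    · simp [h, v.2 j h]
    · simp [h]
  right_inv f := by ext j; simp [j.2]

lemma finrank_Esub (e : Fin ℓ → ZMod 2) :
    Module.finrank (ZMod 2) (Esub e) = wt e := by
  rw [(esubEquiv e).finrank_eq, Module.finrank_pi, Fintype.card_subtype]
  rfl

/-- Vectors vanishing on coordinates `< i`. -/
def Usub (ℓ : ℕ) (i : ℕ) : Submodule (ZMod 2) (Fin ℓ → ZMod 2) where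
  carrier := {u | ∀ j : Fin ℓ, (j : ℕ) < i → u j = 0}
  add_mem' := by intro a b ha hb j hj; simp [ha j hj, hb j hj]
  zero_mem' := by intro j _; rfl
  smul_mem' := by intro c v hv j hj; simp [hv j hj]

lemma mem_Usub {i : ℕ} {u : Fin ℓ → ZMod 2} :
    u ∈ Usub ℓ i ↔ ∀ j : Fin ℓ, (j : ℕ) < i → u j = 0 := Iff.rfl

lemma kernelCode_eq_map (K : Matrix (Fin ℓ) (Fin ℓ) (ZMod 2)) (i : ℕ) :
    kernelCode K i = Submodule.map K.vecMulLinear (Usub ℓ i) := by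
  apply le_antisymm
  · rw [kernelCode, Submodule.span_le]
    rintro v ⟨r, hr, rfl⟩
    exact ⟨Pi.single r 1, fun j hj => Pi.single_eq_of_ne (by rintro rfl; omega) 1,
      Matrix.single_one_vecMul r K⟩
  · rintro v ⟨u, hu, rfl⟩
    have hv : K.vecMulLinear u = ∑ r : Fin ℓ, u r • K r := by
      ext j
      simp [Matrix.vecMulLinear_apply, Matrix.vecMul, dotProduct,
        Finset.sum_apply]
    rw [hv]
    refine Submodule.sum_mem _ fun r _ => ?_
    by_cases hr : (r : ℕ) < i
    · rw [hu r hr]; simp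
    · exact Submodule.smul_mem _ _ (Submodule.subset_span ⟨r, by omega, rfl⟩)

lemma vecMul_injective (K : Matrix (Fin ℓ) (Fin ℓ) (ZMod 2)) (hK : IsUnit K.det)
    {u v : Fin ℓ → ZMod 2} (h : Matrix.vecMul u K = Matrix.vecMul v K) : u = v := by
  have := congrArg (fun w => Matrix.vecMul w K⁻¹) h
  simpa [Matrix.vecMul_vecMul, Matrix.mul_nonsing_inv K hK, Matrix.vecMul_one] using this

lemma kernelCode_succ_le (K : Matrix (Fin ℓ) (Fin ℓ) (ZMod 2)) (i : ℕ) :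
    kernelCode K (i + 1) ≤ kernelCode K i := by
  apply Submodule.span_mono
  rintro v ⟨r, hr, rfl⟩
  exact ⟨r, by omega, rfl⟩

lemma kernelCode_last (K : Matrix (Fin ℓ) (Fin ℓ) (ZMod 2)) :
    kernelCode K ℓ = ⊥ := by
  rw [kernelCode]
  convert Submodule.span_empty
  ext v
  simp only [Set.mem_setOf_eq, Set.mem_empty_iff_false, iff_false]
  rintro ⟨r, hr, -⟩
  exact absurd r.isLt (by omega)

lemma kernelCode_zero (K : Matrix (Fin ℓ) (Fin ℓ) (ZMod 2)) (hK : IsUnit K.det) :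
    kernelCode K 0 = ⊤ := by
  rw [kernelCode_eq_map]
  have hU : Usub ℓ 0 = ⊤ := by
    ext u; simp [mem_Usub]
  rw [hU, Submodule.map_top, LinearMap.range_eq_top]
  intro v
  refine ⟨Matrix.vecMul v K⁻¹, ?_⟩
  simp [Matrix.vecMulLinear_apply, Matrix.vecMul_vecMul, Matrix.nonsing_inv_mul K hK]

/-- Characterization of uncorrectability in terms of the kernel codes. -/
lemma uncorrectable_iff (K : Matrix (Fin ℓ) (Fin ℓ) (ZMod 2)) (hK : IsUnit K.det)
    (i : Fin ℓ) (e : Fin ℓ → ZMod 2) :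
    Uncorrectable K i e ↔
      ∃ c, c ∈ kernelCode K i ⊓ Esub e ∧ c ∉ kernelCode K ((i : ℕ) + 1) := by
  constructor
  · rintro ⟨u', u'', h1, h2, h3⟩
    refine ⟨Matrix.vecMul (u' - u'') K, ⟨?_, ?_⟩, ?_⟩
    · rw [kernelCode_eq_map]
      exact ⟨u' - u'', fun j hj => by
        have := h1 j (by exact hj); simp [this], rfl⟩
    · intro j hj
      rw [Matrix.sub_vecMul]
      simp [h3 j hj]
    · intro hmem
      rw [kernelCode_eq_map] at hmem
      obtain ⟨u2, hu2, hequ⟩ := hmem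
      have : u' - u'' = u2 := vecMul_injective K hK hequ.symm
      have hi : u2 i = 0 := hu2 i (by omega)
      rw [← this] at hi
      simp only [Pi.sub_apply, sub_eq_zero] at hi
      exact h2 hi
  · rintro ⟨c, ⟨hc1, hc2⟩, hc3⟩
    rw [kernelCode_eq_map] at hc1
    obtain ⟨u, hu, rfl⟩ := hc1
    refine ⟨u, 0, fun j hj => ?_, ?_, fun j hj => ?_⟩
    · exact (hu j hj).trans rfl
    · intro h0
      apply hc3
      rw [kernelCode_eq_map]
      refine ⟨u, fun j hj => ?_, rfl⟩
      rcases Nat.lt_succ_iff_lt_or_eq.mp hj with h | h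
      · exact hu j h
      · have : j = i := Fin.ext h
        rw [this]; exact h0
    · rw [Matrix.zero_vecMul]
      exact hc2 j hj

end CapPres

namespace CapPres

variable {ℓ : ℕ}

lemma zmod2_eq_one : ∀ {a : ZMod 2}, a ≠ 0 → a = 1 := by decide

/-- The dimension of `C_i ∩ E(e)`. -/
noncomputable def drk (K : Matrix (Fin ℓ) (Fin ℓ) (ZMod 2)) (e : Fin ℓ → ZMod 2)
    (i : ℕ) : ℕ :=
  Module.finrank (ZMod 2) (kernelCode K i ⊓ Esub e : Submodule (ZMod 2) (Fin ℓ → ZMod 2))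

lemma drk_succ_le (K : Matrix (Fin ℓ) (Fin ℓ) (ZMod 2)) (e : Fin ℓ → ZMod 2) (i : ℕ) :
    drk K e (i + 1) ≤ drk K e i :=
  Submodule.finrank_mono (inf_le_inf_right _ (kernelCode_succ_le K i))

lemma drk_last (K : Matrix (Fin ℓ) (Fin ℓ) (ZMod 2)) (e : Fin ℓ → ZMod 2) :
    drk K e ℓ = 0 := by
  rw [drk, kernelCode_last, bot_inf_eq, finrank_bot]

lemma drk_zero (K : Matrix (Fin ℓ) (Fin ℓ) (ZMod 2)) (hK : IsUnit K.det)
    (e : Fin ℓ → ZMod 2) : drk K e 0 = wt e := by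
  rw [drk, kernelCode_zero K hK, top_inf_eq, finrank_Esub]

lemma drk_lt_of_uncorrectable {K : Matrix (Fin ℓ) (Fin ℓ) (ZMod 2)} (hK : IsUnit K.det)
    {i : Fin ℓ} {e : Fin ℓ → ZMod 2} (h : Uncorrectable K i e) :
    drk K e ((i : ℕ) + 1) < drk K e (i : ℕ) := by
  obtain ⟨c, hc1, hc2⟩ := (uncorrectable_iff K hK i e).mp h
  apply Submodule.finrank_lt_finrank_of_lt
  refine lt_of_le_of_ne (inf_le_inf_right _ (kernelCode_succ_le K i)) fun heq => ?_
  exact hc2 ((heq ▸ hc1 : c ∈ kernelCode K ((i : ℕ) + 1) ⊓ Esub e)).1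

lemma drk_eq_of_not_uncorrectable {K : Matrix (Fin ℓ) (Fin ℓ) (ZMod 2)} (hK : IsUnit K.det)
    {i : Fin ℓ} {e : Fin ℓ → ZMod 2} (h : ¬ Uncorrectable K i e) :
    drk K e (i : ℕ) = drk K e ((i : ℕ) + 1) := by
  have hle : kernelCode K (i : ℕ) ⊓ Esub e ≤ kernelCode K ((i : ℕ) + 1) ⊓ Esub e := by
    intro c hc
    by_cases hc2 : c ∈ kernelCode K ((i : ℕ) + 1)
    · exact ⟨hc2, hc.2⟩
    · exact absurd ((uncorrectable_iff K hK i e).mpr ⟨c, hc, hc2⟩) h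
  exact le_antisymm (Submodule.finrank_mono hle)
    (Submodule.finrank_mono (inf_le_inf_right _ (kernelCode_succ_le K i)))

lemma drk_le_succ_add_one {K : Matrix (Fin ℓ) (Fin ℓ) (ZMod 2)} (hK : IsUnit K.det)
    (i : Fin ℓ) (e : Fin ℓ → ZMod 2) :
    drk K e (i : ℕ) ≤ drk K e ((i : ℕ) + 1) + 1 := by
  by_cases h : Uncorrectable K i e
  swap
  · rw [drk_eq_of_not_uncorrectable hK h]; omega
  obtain ⟨c0, hc01, hc02⟩ := (uncorrectable_iff K hK i e).mp h
  have hc0ne : c0 ≠ 0 := fun h0 => hc02 (h0 ▸ (kernelCode K ((i : ℕ) + 1)).zero_mem)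
  -- every element of C_i ∩ E is in (C_{i+1} ∩ E) ⊔ span {c0}
  have hle : kernelCode K (i : ℕ) ⊓ Esub e ≤
      (kernelCode K ((i : ℕ) + 1) ⊓ Esub e) ⊔ Submodule.span (ZMod 2) {c0} := by
    intro x hx
    by_cases hx2 : x ∈ kernelCode K ((i : ℕ) + 1)
    · exact Submodule.mem_sup_left ⟨hx2, hx.2⟩
    · -- x - c0 ∈ C_{i+1} ∩ E
      have key : x - c0 ∈ kernelCode K ((i : ℕ) + 1) ⊓ Esub e := by
        constructor
        · -- both x and c0 are vecMul of vectors in Usub i with i-th coordinate 1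
          have hx1 := hx.1
          rw [kernelCode_eq_map] at hx1 hc02 hx2 ⊢
          obtain ⟨u, hu, rfl⟩ := hx1
          obtain ⟨u0, hu0, rfl⟩ := (kernelCode_eq_map K (i : ℕ)) ▸ hc01.1
          have hui : u i ≠ 0 := by
            intro h0
            exact hx2 ⟨u, fun j hj => by
              rcases Nat.lt_succ_iff_lt_or_eq.mp hj with hlt | heq
              · exact hu j hlt
              · rw [Fin.ext heq]; exact h0, rfl⟩
          have hu0i : u0 i ≠ 0 := by
            intro h0
            exact hc02 ⟨u0, fun j hj => by
              rcases Nat.lt_succ_iff_lt_or_eq.mp hj with hlt | heq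
              · exact hu0 j hlt
              · rw [Fin.ext heq]; exact h0, rfl⟩
          refine ⟨u - u0, fun j hj => ?_, by
            simp [Matrix.vecMulLinear_apply, Matrix.sub_vecMul]⟩
          rcases Nat.lt_succ_iff_lt_or_eq.mp hj with hlt | heq
          · simp [hu j hlt, hu0 j hlt]
          · have hj' : j = i := Fin.ext heq
            subst hj'
            simp [zmod2_eq_one hui, zmod2_eq_one hu0i]
        · intro j hj
          have h1 := hx.2 j hj
          have h2 := hc01.2 j hj
          simp only [Pi.sub_apply, h1, h2, sub_zero]
      rw [← sub_add_cancel x c0]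
      exact Submodule.add_mem _ (Submodule.mem_sup_left key)
        (Submodule.mem_sup_right (Submodule.mem_span_singleton_self c0))
  calc drk K e (i : ℕ) ≤ Module.finrank (ZMod 2)
        ((kernelCode K ((i : ℕ) + 1) ⊓ Esub e) ⊔ Submodule.span (ZMod 2) {c0} :
          Submodule (ZMod 2) (Fin ℓ → ZMod 2)) := Submodule.finrank_mono hle
    _ ≤ drk K e ((i : ℕ) + 1) + Module.finrank (ZMod 2)
          (Submodule.span (ZMod 2) {c0} : Submodule (ZMod 2) (Fin ℓ → ZMod 2)) := by
        have := Submodule.finrank_sup_add_finrank_inf_eq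
          (kernelCode K ((i : ℕ) + 1) ⊓ Esub e) (Submodule.span (ZMod 2) {c0})
        have hd : drk K e ((i : ℕ) + 1) = Module.finrank (ZMod 2)
            (kernelCode K ((i : ℕ) + 1) ⊓ Esub e :
              Submodule (ZMod 2) (Fin ℓ → ZMod 2)) := rfl
        omega
    _ = drk K e ((i : ℕ) + 1) + 1 := by rw [finrank_span_singleton hc0ne]

end CapPres

namespace CapPres

variable {ℓ : ℕ}

/-- For a fixed erasure pattern `e`, the number of bit-channels for which `e`
is uncorrectable equals the weight of `e`. -/
lemma card_uncorrectable (K : Matrix (Fin ℓ) (Fin ℓ) (ZMod 2)) (hK : IsUnit K.det)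
    (e : Fin ℓ → ZMod 2) :
    (Finset.univ.filter fun i : Fin ℓ => Uncorrectable K i e).card = wt e := by
  have key : ∀ i : Fin ℓ, (if Uncorrectable K i e then (1 : ℤ) else 0)
      = (drk K e (i : ℕ) : ℤ) - drk K e ((i : ℕ) + 1) := by
    intro i
    by_cases h : Uncorrectable K i e
    · have h1 := drk_lt_of_uncorrectable hK h
      have h2 := drk_le_succ_add_one hK i e
      simp only [h, if_true]
      omega
    · have h2 := drk_eq_of_not_uncorrectable hK h
      simp only [h, if_false]
      omega
  have hcast : ((Finset.univ.filter fun i : Fin ℓ => Uncorrectable K i e).card : ℤ)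
      = ∑ i : Fin ℓ, (if Uncorrectable K i e then (1 : ℤ) else 0) := by
    rw [Finset.card_filter]
    push_cast
    rfl
  have : ((Finset.univ.filter fun i : Fin ℓ => Uncorrectable K i e).card : ℤ) = wt e := by
    rw [hcast]
    simp only [key]
    rw [Fin.sum_univ_eq_sum_range (fun n => (drk K e n : ℤ) - drk K e (n + 1)) ℓ,
      Finset.sum_range_sub' (fun n => (drk K e n : ℤ)) ℓ,
      drk_zero K hK e, drk_last K e]
    simp
  exact_mod_cast this

/-- The number of erasure patterns of weight `w` is `ℓ.choose w`. -/
lemma card_wt_eq (w : ℕ) :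
    (Finset.univ.filter fun e : Fin ℓ → ZMod 2 => wt e = w).card = ℓ.choose w := by
  have key : (Finset.univ.filter fun e : Fin ℓ → ZMod 2 => wt e = w).card
      = (Finset.powersetCard w (Finset.univ : Finset (Fin ℓ))).card := by
    refine Finset.card_bij' (fun e _ => Finset.univ.filter fun j => e j ≠ 0)
      (fun s _ => fun j => if j ∈ s then 1 else 0) ?_ ?_ ?_ ?_
    · intro e he
      rw [Finset.mem_filter] at he
      rw [Finset.mem_powersetCard]
      exact ⟨fun x _ => Finset.mem_univ x, he.2⟩
    · intro s hs
      rw [Finset.mem_powersetCard] at hs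
      rw [Finset.mem_filter]
      refine ⟨Finset.mem_univ _, ?_⟩
      have hwt : wt (fun j : Fin ℓ => if j ∈ s then (1 : ZMod 2) else 0) = s.card := by
        rw [wt]
        congr 1
        ext j
        by_cases hj : j ∈ s <;> simp [hj]
      exact hwt.trans hs.2
    · intro e he
      ext j
      by_cases hj : e j = 0
      · simp [hj]
      · simp [hj, zmod2_eq_one hj]
    · intro s hs
      ext j
      by_cases hj : j ∈ s <;> simp [hj]
  rw [key, Finset.card_powersetCard, Finset.card_univ, Fintype.card_fin]

lemma sum_Ecount (K : Matrix (Fin ℓ) (Fin ℓ) (ZMod 2)) (hK : IsUnit K.det) (w : ℕ) :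
    ∑ i : Fin ℓ, Ecount K i w = w * ℓ.choose w := by
  have h1 : ∀ i : Fin ℓ, Ecount K i w
      = (Finset.univ.filter fun e : Fin ℓ → ZMod 2 =>
          Uncorrectable K i e ∧ wt e = w).card := by
    intro i
    rw [Ecount, Nat.card_eq_fintype_card, Fintype.card_subtype]
  calc ∑ i : Fin ℓ, Ecount K i w
      = ∑ i : Fin ℓ, ∑ e : Fin ℓ → ZMod 2,
          if Uncorrectable K i e ∧ wt e = w then 1 else 0 := by
        simp only [h1, Finset.card_filter]
    _ = ∑ e : Fin ℓ → ZMod 2, ∑ i : Fin ℓ,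
          if Uncorrectable K i e ∧ wt e = w then 1 else 0 := Finset.sum_comm
    _ = ∑ e : Fin ℓ → ZMod 2, if wt e = w then wt e else 0 := by
        refine Finset.sum_congr rfl fun e _ => ?_
        by_cases hw : wt e = w
        · have hs : ∑ i : Fin ℓ, (if Uncorrectable K i e ∧ wt e = w then 1 else 0)
              = (Finset.univ.filter fun i : Fin ℓ => Uncorrectable K i e).card := by
            rw [Finset.card_filter]
            exact Finset.sum_congr rfl fun i _ => by simp [hw]
          rw [hs, card_uncorrectable K hK e, if_pos hw]
        · simp [hw]
    _ = ∑ e ∈ Finset.univ.filter fun e : Fin ℓ → ZMod 2 => wt e = w, wt e := by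
        rw [Finset.sum_filter]
    _ = ∑ e ∈ Finset.univ.filter fun e : Fin ℓ → ZMod 2 => wt e = w, w :=
        Finset.sum_congr rfl fun e he => (Finset.mem_filter.mp he).2
    _ = w * ℓ.choose w := by
        rw [Finset.sum_const, card_wt_eq, smul_eq_mul, mul_comm]

/-- The binomial mean identity. -/
lemma binom_mean (n : ℕ) (z : ℝ) :
    ∑ w ∈ Finset.range (n + 1 + 1),
      ((w * (n + 1).choose w : ℕ) : ℝ) * z ^ w * (1 - z) ^ (n + 1 - w)
      = (n + 1) * z := by
  rw [Finset.sum_range_succ']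
  simp only [Nat.zero_mul, Nat.cast_zero, zero_mul, add_zero]
  have hch : ∀ k : ℕ, ((k + 1) * (n + 1).choose (k + 1) : ℕ) = (n + 1) * n.choose k := by
    intro k
    rw [mul_comm (k + 1), ← Nat.add_one_mul_choose_eq n k]
  have hstep : ∀ k ∈ Finset.range (n + 1),
      (((k + 1) * (n + 1).choose (k + 1) : ℕ) : ℝ) * z ^ (k + 1) * (1 - z) ^ (n + 1 - (k + 1))
      = ((n : ℝ) + 1) * z * ((n.choose k : ℝ) * z ^ k * (1 - z) ^ (n - k)) := by
    intro k _
    rw [hch k]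
    have : n + 1 - (k + 1) = n - k := by omega
    rw [this]
    push_cast
    ring
  rw [Finset.sum_congr rfl hstep, ← Finset.mul_sum]
  have hbin : ∑ k ∈ Finset.range (n + 1),
      (n.choose k : ℝ) * z ^ k * (1 - z) ^ (n - k) = 1 := by
    calc ∑ k ∈ Finset.range (n + 1), (n.choose k : ℝ) * z ^ k * (1 - z) ^ (n - k)
        = ∑ k ∈ Finset.range (n + 1), z ^ k * (1 - z) ^ (n - k) * (n.choose k : ℝ) :=
          Finset.sum_congr rfl fun k _ => by ring
      _ = (z + (1 - z)) ^ n := (add_pow z (1 - z) n).symm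
      _ = 1 := by norm_num
  rw [hbin, mul_one]

end CapPres

/-- A polarization step is capacity preserving: `∑_{i=1}^ℓ f_i(z) = ℓ·z`. -/
theorem sum_fpoly_eq {ℓ : ℕ} (hℓ : 0 < ℓ)
    (K : Matrix (Fin ℓ) (Fin ℓ) (ZMod 2)) (hK : IsUnit K.det) (z : ℝ) :
    ∑ i : Fin ℓ, fpoly K i z = ℓ * z := by
  obtain ⟨n, rfl⟩ : ∃ n, ℓ = n + 1 := ⟨ℓ - 1, by omega⟩
  calc ∑ i : Fin (n + 1), fpoly K i z
      = ∑ w ∈ Finset.range (n + 1 + 1),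
          ∑ i : Fin (n + 1), (Ecount K i w : ℝ) * z ^ w * (1 - z) ^ (n + 1 - w) := by
        rw [Finset.sum_comm]
        rfl
    _ = ∑ w ∈ Finset.range (n + 1 + 1),
          ((w * (n + 1).choose w : ℕ) : ℝ) * z ^ w * (1 - z) ^ (n + 1 - w) := by
        refine Finset.sum_congr rfl fun w _ => ?_
        rw [← Finset.sum_mul, ← Finset.sum_mul, ← Nat.cast_sum,
          CapPres.sum_Ecount K hK w]
    _ = (n + 1) * z := CapPres.binom_mean n z
    _ = ((n + 1 : ℕ) : ℝ) * z := by push_cast; ring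
end

section
/- Let K be an invertible self-dual ℓ×ℓ matrix over F_2. Then for every i with 1 ≤ i ≤ ℓ and every z ∈ [0,1], f_i(z) + f_{ℓ+1-i}(1-z) ≤ 1. -/
open Finset

namespace FpolyAux

open scoped Classical

variable {ℓ : ℕ}

lemma zmod2_ne_iff : ∀ x y : ZMod 2, x ≠ y ↔ x - y = 1 := by decide

lemma mem_dualCode {C : Submodule (ZMod 2) (Fin ℓ → ZMod 2)} {v : Fin ℓ → ZMod 2} :
    v ∈ dualCode C ↔ ∀ c ∈ C, ∑ j, v j * c j = 0 := Iff.rfl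

def bform (u v : Fin ℓ → ZMod 2) : ZMod 2 := ∑ j, u j * v j

lemma bform_comm (u v : Fin ℓ → ZMod 2) : bform u v = bform v u := by
  simp [bform, mul_comm]

lemma bform_add_left (x y w : Fin ℓ → ZMod 2) :
    bform (x + y) w = bform x w + bform y w := by
  simp [bform, add_mul, Finset.sum_add_distrib]

lemma bform_eq_zero_of_mem_dual {C : Submodule (ZMod 2) (Fin ℓ → ZMod 2)}
    {v c : Fin ℓ → ZMod 2} (hv : v ∈ dualCode C) (hc : c ∈ C) : bform v c = 0 :=
  hv c hc

lemma kernelCode_mono (K : Matrix (Fin ℓ) (Fin ℓ) (ZMod 2)) {m n : ℕ} (h : n ≤ m) :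
    kernelCode K m ≤ kernelCode K n := by
  apply Submodule.span_mono
  rintro v ⟨r, hr, rfl⟩
  exact ⟨r, h.trans hr, rfl⟩

lemma row_mem_kernelCode (K : Matrix (Fin ℓ) (Fin ℓ) (ZMod 2)) {n : ℕ} {r : Fin ℓ}
    (h : n ≤ (r : ℕ)) : K r ∈ kernelCode K n :=
  Submodule.subset_span ⟨r, h, rfl⟩

lemma vecMul_eq_sum (v : Fin ℓ → ZMod 2) (K : Matrix (Fin ℓ) (Fin ℓ) (ZMod 2)) :
    Matrix.vecMul v K = ∑ r, v r • K r := by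
  funext j
  simp [Matrix.vecMul, dotProduct, Finset.sum_apply]

/-- From an uncorrectable pattern extract a codeword `a = K i + c` with `c ∈ C_{i+1}`
supported inside `e`. -/
lemma exists_codeword {K : Matrix (Fin ℓ) (Fin ℓ) (ZMod 2)} {i : Fin ℓ}
    {e : Fin ℓ → ZMod 2} (h : Uncorrectable K i e) :
    ∃ a : Fin ℓ → ZMod 2, (a - K i) ∈ kernelCode K ((i : ℕ) + 1) ∧
      (∀ j, e j = 0 → a j = 0) := by
  classical
  obtain ⟨u', u'', hlt, hne, hcov⟩ := h
  set v : Fin ℓ → ZMod 2 := u' - u'' with hv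
  have hvi : v i = 1 := (zmod2_ne_iff _ _).mp hne
  have hvlt : ∀ j, j < i → v j = 0 := fun j hj => by
    simp [hv, sub_eq_zero, hlt j hj]
  refine ⟨Matrix.vecMul v K, ?_, ?_⟩
  · have hdecomp : Matrix.vecMul v K - K i = ∑ r ∈ univ.filter (fun r => i < r), v r • K r := by
      rw [vecMul_eq_sum]
      rw [← Finset.add_sum_erase (univ : Finset (Fin ℓ)) (fun r => v r • K r) (mem_univ i)]
      rw [hvi, one_smul, add_sub_cancel_left]
      refine (Finset.sum_subset ?_ ?_).symm
      · intro r hr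
        rw [mem_filter] at hr
        exact Finset.mem_erase.mpr ⟨hr.2.ne', mem_univ r⟩
      · intro r hr hnr
        rw [Finset.mem_erase] at hr
        rw [mem_filter] at hnr
        have : r < i := by
          rcases lt_trichotomy r i with h1 | h1 | h1
          · exact h1
          · exact absurd h1 hr.1
          · exact absurd ⟨mem_univ r, h1⟩ hnr
        rw [hvlt r this, zero_smul]
    rw [hdecomp]
    refine Submodule.sum_mem _ fun r hr => ?_
    rw [mem_filter] at hr
    exact Submodule.smul_mem _ _ (row_mem_kernelCode K (by
      have := Fin.lt_iff_val_lt_val.mp hr.2; omega))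
  · intro j hj
    have : Matrix.vecMul v K j = Matrix.vecMul u' K j - Matrix.vecMul u'' K j := by
      rw [hv, Matrix.sub_vecMul]; rfl
    rw [this, hcov j hj, sub_self]


lemma bform_eq_zero_of_kc {K : Matrix (Fin ℓ) (Fin ℓ) (ZMod 2)} (hsd : SelfDual K)
    {m n : ℕ} (hm : m ≤ ℓ) (hmn : ℓ - m = n) {x c : Fin ℓ → ZMod 2}
    (hx : x ∈ kernelCode K m) (hc : c ∈ kernelCode K n) : bform x c = 0 := by
  have := hsd m hm
  rw [hmn] at this
  exact bform_eq_zero_of_mem_dual (this ▸ hx) hc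

/-- The key disjointness: `e` uncorrectable for `i` and the complement of `e`
uncorrectable for `i.rev` cannot both hold. -/
lemma not_both {K : Matrix (Fin ℓ) (Fin ℓ) (ZMod 2)} (hK : IsUnit K.det)
    (hsd : SelfDual K) (i : Fin ℓ) (e : Fin ℓ → ZMod 2) :
    ¬ (Uncorrectable K i e ∧ Uncorrectable K i.rev (fun j => e j + 1)) := by
  classical
  rintro ⟨h1, h2⟩
  obtain ⟨a, hca, hsa⟩ := exists_codeword h1
  obtain ⟨b, hcb, hsb⟩ := exists_codeword h2
  set i' : Fin ℓ := i.rev with hi'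
  have hiℓ : (i : ℕ) < ℓ := i.isLt
  have hval : (i' : ℕ) = ℓ - 1 - (i : ℕ) := by
    simp [hi', Fin.val_rev]; omega
  -- name the shifted codewords
  set ca : Fin ℓ → ZMod 2 := a - K i with hca'
  set cb : Fin ℓ → ZMod 2 := b - K i' with hcb'
  have ha : a = K i + ca := by rw [hca']; ring
  have hb : b = K i' + cb := by rw [hcb']; ring
  -- b ∈ C_{i'}
  have hbmem : b ∈ kernelCode K (i' : ℕ) := by
    rw [hb]
    exact Submodule.add_mem _ (row_mem_kernelCode K le_rfl)
      (kernelCode_mono K (Nat.le_succ _) hcb)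
  -- bform a b = 0 from disjoint supports
  have hab : bform a b = 0 := by
    apply Finset.sum_eq_zero
    intro j _
    by_cases hj : e j = 0
    · rw [hsa j hj, zero_mul]
    · have : e j + 1 = 0 := by
        have : ∀ x : ZMod 2, x ≠ 0 → x + 1 = 0 := by decide
        exact this _ hj
      rw [hsb j this, mul_zero]
  -- cross terms vanish
  have hKii' : bform (K i) (K i') = 0 := by
    have e1 : bform ca b = 0 :=
      bform_eq_zero_of_kc hsd (m := (i:ℕ)+1) (n := (i':ℕ)) (by omega) (by omega) hca hbmem
    have e2 : bform cb (K i) = 0 :=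
      bform_eq_zero_of_kc hsd (m := (i':ℕ)+1) (n := (i:ℕ)) (by omega) (by omega) hcb
        (row_mem_kernelCode K le_rfl)
    have hr1 : bform (K i) b = bform (K i) (K i') + bform cb (K i) := by
      rw [hb, bform_comm (K i) (K i' + cb), bform_add_left, bform_comm (K i') (K i)]
    have expand : bform a b = bform (K i) (K i') + bform cb (K i) + bform ca b := by
      rw [ha, bform_add_left, hr1]
    rw [hab, e1, e2, add_zero, add_zero] at expand
    exact expand.symm
  -- hence K i' is orthogonal to all of C_i
  have hdual : K i' ∈ dualCode (kernelCode K (i : ℕ)) := by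
    rw [mem_dualCode]
    intro c hc
    induction hc using Submodule.span_induction with
    | mem x hx =>
        obtain ⟨r, hr, rfl⟩ := hx
        show bform (K i') (K r) = 0
        rcases eq_or_lt_of_le hr with h | h
        · have hri : r = i := Fin.ext h.symm
          rw [hri, bform_comm]
          exact hKii'
        · exact bform_eq_zero_of_kc hsd (m := (i':ℕ)) (n := (i:ℕ)+1) (by omega) (by omega)
            (row_mem_kernelCode K le_rfl) (row_mem_kernelCode K h)
    | zero => simp
    | add x y _ _ hx hy =>
        simpa [mul_add, Finset.sum_add_distrib] using by rw [hx, hy]; simp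
    | smul r x _ hx =>
        simp only [Pi.smul_apply, smul_eq_mul]
        calc ∑ j, K i' j * (r * x j) = r * ∑ j, K i' j * x j := by
              rw [Finset.mul_sum]; congr 1; funext j; ring
          _ = 0 := by rw [hx, mul_zero]
  -- so K i' ∈ C_{ℓ - i}
  have hmem : K i' ∈ kernelCode K (ℓ - (i : ℕ)) := by
    have := hsd (ℓ - (i : ℕ)) (Nat.sub_le _ _)
    have h' : ℓ - (ℓ - (i:ℕ)) = (i:ℕ) := by omega
    rw [h'] at this
    rw [this]
    exact hdual
  -- contradiction with linear independence of rows
  have hli : LinearIndependent (ZMod 2) (fun r => K r) :=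
    Matrix.linearIndependent_rows_iff_isUnit.mpr ((Matrix.isUnit_iff_isUnit_det K).mpr hK)
  have hset : {v : Fin ℓ → ZMod 2 | ∃ r : Fin ℓ, ℓ - (i:ℕ) ≤ (r : ℕ) ∧ v = K r}
      = (fun r => K r) '' {r : Fin ℓ | ℓ - (i:ℕ) ≤ (r : ℕ)} := by
    ext v
    simp only [Set.mem_setOf_eq, Set.mem_image]
    constructor
    · rintro ⟨r, hr, rfl⟩; exact ⟨r, hr, rfl⟩
    · rintro ⟨r, hr, rfl⟩; exact ⟨r, hr, rfl⟩
  have hnot : i' ∉ {r : Fin ℓ | ℓ - (i:ℕ) ≤ (r : ℕ)} := by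
    simp only [Set.mem_setOf_eq, not_le, hval]
    omega
  exact hli.notMem_span_image hnot (by rwa [kernelCode, hset] at hmem)


lemma wt_le (e : Fin ℓ → ZMod 2) : wt e ≤ ℓ := by
  classical
  calc wt e ≤ (univ : Finset (Fin ℓ)).card := Finset.card_filter_le _ _
    _ = ℓ := by simp

lemma fpoly_eq_sum (K : Matrix (Fin ℓ) (Fin ℓ) (ZMod 2)) (i : Fin ℓ) (z : ℝ) :
    fpoly K i z = ∑ e : Fin ℓ → ZMod 2,
      (if Uncorrectable K i e then z ^ wt e * (1 - z) ^ (ℓ - wt e) else 0) := by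
  classical
  rw [fpoly]
  conv_rhs => rw [← Finset.sum_fiberwise_of_maps_to (g := wt) (t := Finset.range (ℓ + 1))
    (fun e _ => Finset.mem_range.mpr (Nat.lt_succ_of_le (wt_le e)))
    (fun e => if Uncorrectable K i e then z ^ wt e * (1 - z) ^ (ℓ - wt e) else 0)]
  refine Finset.sum_congr rfl fun w _ => ?_
  have hcongr : ∀ e ∈ univ.filter (fun e => wt e = w),
      (if Uncorrectable K i e then z ^ wt e * (1 - z) ^ (ℓ - wt e) else 0)
      = (if Uncorrectable K i e then z ^ w * (1 - z) ^ (ℓ - w) else 0) := by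
    intro e he
    rw [mem_filter] at he
    rw [he.2]
  rw [Finset.sum_congr rfl hcongr, ← Finset.sum_filter, Finset.sum_const,
    Finset.filter_filter, nsmul_eq_mul]
  have hcard : Ecount K i w
      = (univ.filter fun e => wt e = w ∧ Uncorrectable K i e).card := by
    rw [Ecount, Nat.card_eq_fintype_card, Fintype.card_subtype]
    congr 1
    apply Finset.filter_congr
    intro e _
    exact and_comm
  rw [hcard, mul_assoc]

lemma wt_compl (e : Fin ℓ → ZMod 2) : wt (fun j => e j + 1) = ℓ - wt e := by
  classical
  have hx : ∀ x : ZMod 2, (x + 1 ≠ 0 ↔ ¬ x ≠ 0) := by decide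
  have hs : (univ.filter fun j => e j + 1 ≠ 0) = (univ.filter fun j => e j ≠ 0)ᶜ := by
    ext j
    simp only [mem_filter, Finset.mem_compl, mem_univ, true_and]
    exact hx (e j)
  rw [wt, wt, hs, Finset.card_compl, Fintype.card_fin]

lemma sum_weights (z : ℝ) :
    ∑ e : Fin ℓ → ZMod 2, z ^ wt e * (1 - z) ^ (ℓ - wt e) = 1 := by
  classical
  have h1 : ∀ e : Fin ℓ → ZMod 2, z ^ wt e * (1 - z) ^ (ℓ - wt e)
      = ∏ j, (if e j ≠ 0 then z else 1 - z) := by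
    intro e
    rw [Finset.prod_ite, Finset.prod_const, Finset.prod_const]
    have hc : (univ.filter fun j => ¬ e j ≠ 0).card = ℓ - wt e := by
      have h2 := Finset.card_filter_add_card_filter_not
        (s := (univ : Finset (Fin ℓ))) (p := fun j => e j ≠ 0)
      have h3 : (univ : Finset (Fin ℓ)).card = ℓ := by simp
      have h4 : wt e ≤ ℓ := wt_le e
      rw [wt]
      omega
    rw [hc]
    rfl
  rw [Finset.sum_congr rfl fun e _ => h1 e]
  have hpi := Finset.sum_prod_piFinset (ι := Fin ℓ) (univ : Finset (ZMod 2))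
    (fun _ x => if x ≠ 0 then z else 1 - z)
  rw [← Fintype.piFinset_univ, hpi]
  have huniv : (univ : Finset (ZMod 2)) = {0, 1} := by decide
  have hinner : ∑ x : ZMod 2, (if x ≠ 0 then z else 1 - z) = 1 := by
    rw [huniv, Finset.sum_insert (by decide), Finset.sum_singleton]
    norm_num
  rw [Finset.prod_congr rfl fun j _ => hinner, Finset.prod_const_one]

end FpolyAux

/-- For a self-dual kernel, `f_i(z) + f_{ℓ+1-i}(1-z) ≤ 1` on `[0,1]`. -/
theorem fpoly_add_rev_le_one {ℓ : ℕ} (hℓ : 0 < ℓ)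
    (K : Matrix (Fin ℓ) (Fin ℓ) (ZMod 2)) (hK : IsUnit K.det)
    (hsd : SelfDual K) (i : Fin ℓ) (z : ℝ) (hz : z ∈ Set.Icc (0 : ℝ) 1) :
    fpoly K i z + fpoly K i.rev (1 - z) ≤ 1 := by
  classical
  obtain ⟨hz0, hz1⟩ := hz
  have hnn : ∀ e : Fin ℓ → ZMod 2, (0:ℝ) ≤ z ^ wt e * (1 - z) ^ (ℓ - wt e) :=
    fun e => mul_nonneg (pow_nonneg hz0 _) (pow_nonneg (by linarith) _)
  rw [FpolyAux.fpoly_eq_sum, FpolyAux.fpoly_eq_sum]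
  have h1z : (1 : ℝ) - (1 - z) = z := by ring
  rw [h1z]
  have hinv : Function.Involutive (fun e : Fin ℓ → ZMod 2 => fun j => e j + 1) := by
    intro e
    funext j
    have h11 : (1 : ZMod 2) + 1 = 0 := by decide
    show e j + 1 + 1 = e j
    rw [add_assoc, h11, add_zero]
  have hrev : ∑ e : Fin ℓ → ZMod 2,
      (if Uncorrectable K i.rev e then (1 - z) ^ wt e * z ^ (ℓ - wt e) else 0)
      = ∑ e : Fin ℓ → ZMod 2,
      (if Uncorrectable K i.rev (fun j => e j + 1) then z ^ wt e * (1 - z) ^ (ℓ - wt e)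
        else 0) := by
    refine (Fintype.sum_bijective _ hinv.bijective
      (fun e => if Uncorrectable K i.rev (fun j => e j + 1)
        then z ^ wt e * (1 - z) ^ (ℓ - wt e) else 0)
      (fun e => if Uncorrectable K i.rev e then (1 - z) ^ wt e * z ^ (ℓ - wt e) else 0)
      fun e => ?_).symm
    rw [FpolyAux.wt_compl]
    have hle := FpolyAux.wt_le e
    have h5 : ℓ - (ℓ - wt e) = wt e := by omega
    rw [h5, mul_comm]
  rw [hrev, ← Finset.sum_add_distrib]
  calc ∑ e : Fin ℓ → ZMod 2,
        ((if Uncorrectable K i e then z ^ wt e * (1 - z) ^ (ℓ - wt e) else 0)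
          + (if Uncorrectable K i.rev (fun j => e j + 1)
              then z ^ wt e * (1 - z) ^ (ℓ - wt e) else 0))
      ≤ ∑ e : Fin ℓ → ZMod 2, z ^ wt e * (1 - z) ^ (ℓ - wt e) := by
        refine Finset.sum_le_sum fun e _ => ?_
        by_cases hP : Uncorrectable K i e
        · by_cases hQ : Uncorrectable K i.rev (fun j => e j + 1)
          · exact absurd ⟨hP, hQ⟩ (FpolyAux.not_both hK hsd i e)
          · simp [hP, hQ]
        · by_cases hQ : Uncorrectable K i.rev (fun j => e j + 1)
          · simp [hP, hQ]
          · simp only [hP, hQ, if_false, add_zero]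
            exact hnn e
    _ = 1 := FpolyAux.sum_weights z
end
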